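/- Fix real numbers a₀, a₁, b₀, b₁ and training data x¹, …, x^N ∈ ℝ^n, y¹, …, y^N ∈ ℝ. On the convex set D = {(W, b) ∈ ℝ^n × ℝ | b₀ + b₁(⟨W, xⁱ⟩ + b) > 0 for all i = 1..N}, the loss function L(W, b) = max_{i=1..N} | yⁱ − (a₀ + a₁(⟨W, xⁱ⟩ + b))/(b₀ + b₁(⟨W, xⁱ⟩ + b)) | is quasiconvex. -/

import Mathlib

open RealInnerProductSpace

lemma stmt_7_key (yi np nq dp dq t : ℝ) (hdp : 0 < dp) (hdq : 0 < dq)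
    (ht0 : 0 ≤ t) (ht1 : t ≤ 1) :
    |yi - (t*np+(1-t)*nq)/(t*dp+(1-t)*dq)| ≤ max |yi - np/dp| |yi - nq/dq| := by
  have ht1' : 0 ≤ 1 - t := by linarith
  have hd : 0 < t*dp+(1-t)*dq := by
    have hm : 0 < min dp dq := lt_min hdp hdq
    have h1 := mul_le_mul_of_nonneg_left (min_le_left dp dq) ht0
    have h2 := mul_le_mul_of_nonneg_left (min_le_right dp dq) ht1'
    nlinarith
  set M := max |yi - np/dp| |yi - nq/dq| with hM
  have hM0 : 0 ≤ M := le_trans (abs_nonneg _) (le_max_left _ _)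
  have h1 : |yi * dp - np| ≤ M * dp := by
    have h : |yi - np/dp| ≤ M := le_max_left _ _
    have e : yi - np/dp = (yi*dp - np)/dp := by field_simp
    rw [e, abs_div, abs_of_pos hdp, div_le_iff₀ hdp] at h
    exact h
  have h2 : |yi * dq - nq| ≤ M * dq := by
    have h : |yi - nq/dq| ≤ M := le_max_right _ _
    have e : yi - nq/dq = (yi*dq - nq)/dq := by field_simp
    rw [e, abs_div, abs_of_pos hdq, div_le_iff₀ hdq] at h
    exact h
  have e : yi - (t*np+(1-t)*nq)/(t*dp+(1-t)*dq)
      = (t*(yi*dp - np) + (1-t)*(yi*dq - nq))/(t*dp+(1-t)*dq) := by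
    field_simp; ring
  rw [e, abs_div, abs_of_pos hd, div_le_iff₀ hd]
  calc |t*(yi*dp-np)+(1-t)*(yi*dq-nq)| ≤ t*|yi*dp-np| + (1-t)*|yi*dq-nq| := by
        refine (abs_add_le _ _).trans ?_
        rw [abs_mul, abs_mul, abs_of_nonneg ht0, abs_of_nonneg ht1']
    _ ≤ t*(M*dp) + (1-t)*(M*dq) := by gcongr
    _ = M*(t*dp+(1-t)*dq) := by ring

/-- Theorem 1 of the paper: with fixed rational-activation coefficients
`a₀, a₁, b₀, b₁` and training data `(xⁱ, yⁱ)`, the uniform loss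
`L(W,b) = maxᵢ |yⁱ - (a₀ + a₁(⟪W,xⁱ⟫+b))/(b₀ + b₁(⟪W,xⁱ⟫+b))|`
is quasiconvex on the convex set where all denominators are positive. -/
theorem stmt_7 {n N : ℕ} (hN : 0 < N) (a₀ a₁ b₀ b₁ : ℝ)
    (x : Fin N → EuclideanSpace ℝ (Fin n)) (y : Fin N → ℝ)
    (hne : (Finset.univ : Finset (Fin N)).Nonempty)
    (D : Set (EuclideanSpace ℝ (Fin n) × ℝ))
    (hD : D = {p | ∀ i, b₀ + b₁ * (⟪p.1, x i⟫ + p.2) > 0})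
    (L : EuclideanSpace ℝ (Fin n) × ℝ → ℝ)
    (hL : ∀ p, L p = Finset.univ.sup' hne (fun i =>
        |y i - (a₀ + a₁ * (⟪p.1, x i⟫ + p.2)) / (b₀ + b₁ * (⟪p.1, x i⟫ + p.2))|)) :
    Convex ℝ D ∧
    ∀ p ∈ D, ∀ q ∈ D, ∀ t ∈ Set.Icc (0 : ℝ) 1,
      L (t • p + (1 - t) • q) ≤ max (L p) (L q) := by
  subst hD
  have haff : ∀ (p q : EuclideanSpace ℝ (Fin n) × ℝ) (t s : ℝ) (i : Fin N),
      ⟪(t • p + s • q).1, x i⟫ + (t • p + s • q).2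
        = t * (⟪p.1, x i⟫ + p.2) + s * (⟪q.1, x i⟫ + q.2) := by
    intro p q t s i
    simp only [Prod.fst_add, Prod.snd_add, Prod.smul_fst, Prod.smul_snd,
      inner_add_left, real_inner_smul_left, smul_eq_mul]
    ring
  constructor
  · intro p hp q hq t s ht hs hts i
    have hp' := hp i
    have hq' := hq i
    rw [haff]
    have hs' : s = 1 - t := by linarith
    subst hs'
    have key : b₀ + b₁ * (t * (⟪p.1, x i⟫ + p.2) + (1 - t) * (⟪q.1, x i⟫ + q.2))
        = t * (b₀ + b₁ * (⟪p.1, x i⟫ + p.2)) + (1 - t) * (b₀ + b₁ * (⟪q.1, x i⟫ + q.2)) := by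
      ring
    rw [key]
    have hm : 0 < min (b₀ + b₁ * (⟪p.1, x i⟫ + p.2)) (b₀ + b₁ * (⟪q.1, x i⟫ + q.2)) :=
      lt_min hp' hq'
    have h1 := mul_le_mul_of_nonneg_left (min_le_left (b₀ + b₁ * (⟪p.1, x i⟫ + p.2)) (b₀ + b₁ * (⟪q.1, x i⟫ + q.2))) ht
    have h2 := mul_le_mul_of_nonneg_left (min_le_right (b₀ + b₁ * (⟪p.1, x i⟫ + p.2)) (b₀ + b₁ * (⟪q.1, x i⟫ + q.2))) hs
    nlinarith
  · intro p hp q hq t ht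
    obtain ⟨ht0, ht1⟩ := ht
    rw [hL, hL, hL]
    apply Finset.sup'_le
    intro i _
    have hp' : 0 < b₀ + b₁ * (⟪p.1, x i⟫ + p.2) := hp i
    have hq' : 0 < b₀ + b₁ * (⟪q.1, x i⟫ + q.2) := hq i
    have hnum : a₀ + a₁ * (⟪(t • p + (1-t) • q).1, x i⟫ + (t • p + (1-t) • q).2)
        = t * (a₀ + a₁ * (⟪p.1, x i⟫ + p.2)) + (1-t) * (a₀ + a₁ * (⟪q.1, x i⟫ + q.2)) := by
      rw [haff]; ring
    have hden : b₀ + b₁ * (⟪(t • p + (1-t) • q).1, x i⟫ + (t • p + (1-t) • q).2)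
        = t * (b₀ + b₁ * (⟪p.1, x i⟫ + p.2)) + (1-t) * (b₀ + b₁ * (⟪q.1, x i⟫ + q.2)) := by
      rw [haff]; ring
    rw [hnum, hden]
    refine le_trans (stmt_7_key _ _ _ _ _ _ hp' hq' ht0 ht1) ?_
    exact max_le_max
      (Finset.le_sup' (f := fun i => |y i - (a₀ + a₁ * (⟪p.1, x i⟫ + p.2)) / (b₀ + b₁ * (⟪p.1, x i⟫ + p.2))|) (Finset.mem_univ i))
      (Finset.le_sup' (f := fun i => |y i - (a₀ + a₁ * (⟪q.1, x i⟫ + q.2)) / (b₀ + b₁ * (⟪q.1, x i⟫ + q.2))|) (Finset.mem_univ i))
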